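/- arXiv:2307.12047 — 8 statements merged into one kernel-verified Lean document; each statement's English description precedes it below -/
import Mathlib

section
/- Let N ≥ 1 and let q be an integer, and set L = gcd(2N, 2q+1), Ñ = 2N/L and q̃ = (2q+1)/L. Assume L > 1 and let p be a prime dividing Ñ. Let n ∈ ℤ^N and define the folded coefficients y_l = Σ_{0 ≤ k < N, k ≡ l (mod Ñ)} n_k for 0 ≤ l < Ñ. If y_l = y_{l mod (Ñ/p)} for all 0 ≤ l < Ñ, then Σ_{j=0}^{N-1} n_j · exp(-iπ (2q+1) j / N) = 0. -/
/-- Extension of a vector indexed by `Fin N` to all of `ℕ`, by zero. -/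
def pad {N : ℕ} {α : Type*} [Zero α] (n : Fin N → α) : ℕ → α :=
  fun k => if h : k < N then n ⟨k, h⟩ else 0

/-- Reindexing a sum over `range (p * m)` as a double sum. -/
lemma sum_range_mul' {M : Type*} [AddCommMonoid M] (f : ℕ → M) (m p : ℕ) :
    ∑ l ∈ Finset.range (p * m), f l
      = ∑ b ∈ Finset.range p, ∑ a ∈ Finset.range m, f (m * b + a) := by
  rw [← Finset.sum_product']
  refine Finset.sum_nbij' (fun l => (l / m, l % m)) (fun x => m * x.1 + x.2) ?_ ?_ ?_ ?_ ?_
  · intro l hl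
    simp only [Finset.mem_range, Finset.mem_product] at *
    have hm : 0 < m := by
      rcases Nat.eq_zero_or_pos m with h | h
      · rw [h, Nat.mul_zero] at hl; omega
      · exact h
    exact ⟨(Nat.div_lt_iff_lt_mul hm).2 hl, Nat.mod_lt _ hm⟩
  · intro x hx
    simp only [Finset.mem_range, Finset.mem_product] at *
    calc m * x.1 + x.2 < m * x.1 + m := by omega
    _ = m * (x.1 + 1) := by ring
    _ ≤ m * p := Nat.mul_le_mul_left _ (by omega)
    _ = p * m := Nat.mul_comm _ _
  · intro l _; simpa using Nat.div_add_mod l m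
  · intro x hx
    simp only [Finset.mem_range, Finset.mem_product] at hx
    have hm : 0 < m := by omega
    have h1 : (m * x.1 + x.2) / m = x.1 := by
      rw [Nat.mul_add_div hm, Nat.div_eq_of_lt hx.2]; omega
    have h2 : (m * x.1 + x.2) % m = x.2 := by
      rw [Nat.mul_add_mod, Nat.mod_eq_of_lt hx.2]
    simp [h1, h2]
  · intro l _
    exact congrArg f (by simpa using (Nat.div_add_mod l m).symm)

theorem negacyclic_folded_solution (N : ℕ) (hN : 1 ≤ N) (q : ℤ)
    (L : ℕ) (hL : L = Int.gcd (2 * (N : ℤ)) (2 * q + 1)) (hL1 : 1 < L)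
    (Ntil : ℕ) (hNtil : Ntil = 2 * N / L)
    (p : ℕ) (hp : p.Prime) (hpd : p ∣ Ntil)
    (n : Fin N → ℤ)
    (y : ℕ → ℤ) (hy : ∀ l, y l = ∑ k ∈ Finset.range N, if k % Ntil = l then pad n k else 0)
    (h : ∀ l < Ntil, y l = y (l % (Ntil / p))) :
    ∑ j : Fin N, (n j : ℂ) *
      Complex.exp (-((Real.pi : ℂ) * Complex.I * ((2 * q + 1 : ℤ) : ℂ) * ((j : ℕ) : ℂ)) / (N : ℂ))
      = 0 := by
  have hN0 : (N : ℂ) ≠ 0 := Nat.cast_ne_zero.mpr (by omega)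
  set ω : ℂ := Complex.exp (-((Real.pi : ℂ) * Complex.I * ((2 * q + 1 : ℤ) : ℂ)) / (N : ℂ))
    with hω
  -- arithmetic setup
  have hLdvd1 : (L : ℤ) ∣ 2 * (N : ℤ) := by rw [hL]; exact Int.gcd_dvd_left _ _
  have hLdvd2 : (L : ℤ) ∣ 2 * q + 1 := by rw [hL]; exact Int.gcd_dvd_right _ _
  set qt : ℤ := (2 * q + 1) / (L : ℤ) with hqt
  have hq : (L : ℤ) * qt = 2 * q + 1 := Int.mul_ediv_cancel' hLdvd2
  have hLdvdN : L ∣ 2 * N := by exact_mod_cast hLdvd1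
  have hLN : L * Ntil = 2 * N := by rw [hNtil, Nat.mul_div_cancel' hLdvdN]
  have hNtil0 : 0 < Ntil := by
    rcases Nat.eq_zero_or_pos Ntil with h0 | h0
    · exfalso; rw [h0, Nat.mul_zero] at hLN; omega
    · exact h0
  set m : ℕ := Ntil / p with hm
  have hpm : p * m = Ntil := Nat.mul_div_cancel' hpd
  have hm0 : 0 < m := by
    rcases Nat.eq_zero_or_pos m with h0 | h0
    · exfalso; rw [h0, Nat.mul_zero] at hpm; omega
    · exact h0
  -- coprimality
  have hcop : Int.gcd (Ntil : ℤ) qt = 1 := by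
    have hgpos : 0 < Int.gcd (2 * (N : ℤ)) (2 * q + 1) := by omega
    have hNint : (Ntil : ℤ) = 2 * (N : ℤ) / (L : ℤ) := by
      have h1 : (L : ℤ) * (Ntil : ℤ) = 2 * (N : ℤ) := by exact_mod_cast hLN
      rw [← h1, Int.mul_ediv_cancel_left _ (by exact_mod_cast (by omega : L ≠ 0))]
    rw [hNint, hqt, hL]
    exact Int.gcd_div_gcd_div_gcd hgpos
  have hpqt : ¬ ((p : ℤ) ∣ qt) := by
    intro hd
    have hd2 : (p : ℤ) ∣ (Ntil : ℤ) := by exact_mod_cast hpd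
    have h3 : (p : ℤ) ∣ (Int.gcd (Ntil : ℤ) qt : ℤ) := Int.dvd_coe_gcd hd2 hd
    rw [hcop] at h3
    have := Int.le_of_dvd (by norm_num) h3
    have := hp.two_le
    omega
  -- ω powers
  have hterm : ∀ j : ℕ,
      Complex.exp (-((Real.pi : ℂ) * Complex.I * ((2 * q + 1 : ℤ) : ℂ) * (j : ℂ)) / (N : ℂ))
        = ω ^ j := by
    intro j
    rw [hω, ← Complex.exp_nat_mul]
    congr 1
    ring
  have hkey : ((2 * q + 1 : ℤ) : ℂ) * (Ntil : ℂ) = (qt : ℂ) * (2 * (N : ℂ)) := by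
    have h1 : (2 * q + 1) * (Ntil : ℤ) = qt * (2 * (N : ℤ)) := by
      have hLNz : (L : ℤ) * (Ntil : ℤ) = 2 * (N : ℤ) := by exact_mod_cast hLN
      calc (2 * q + 1) * (Ntil : ℤ) = ((L : ℤ) * qt) * Ntil := by rw [hq]
      _ = qt * ((L : ℤ) * Ntil) := by ring
      _ = qt * (2 * (N : ℤ)) := by rw [hLNz]
    exact_mod_cast h1
  have hωN : ω ^ Ntil = 1 := by
    rw [hω, ← Complex.exp_nat_mul]
    have h1 : (Ntil : ℂ) * (-((Real.pi : ℂ) * Complex.I * ((2 * q + 1 : ℤ) : ℂ)) / (N : ℂ))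
        = ((-qt : ℤ) : ℂ) * (2 * Real.pi * Complex.I) := by
      push_cast at hkey ⊢
      field_simp
      linear_combination -hkey
    rw [h1, Complex.exp_int_mul_two_pi_mul_I]
  have hωm : ω ^ m ≠ 1 := by
    rw [hω, ← Complex.exp_nat_mul]
    intro h1
    rw [Complex.exp_eq_one_iff] at h1
    obtain ⟨k, hk⟩ := h1
    have hπ : (Real.pi : ℂ) ≠ 0 := by exact_mod_cast Real.pi_ne_zero
    have hI : Complex.I ≠ 0 := Complex.I_ne_zero
    have hC : -((m : ℂ) * ((2 * q + 1 : ℤ) : ℂ)) = (k : ℂ) * 2 * (N : ℂ) := by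
      have h2 : (m : ℂ) * (-((Real.pi : ℂ) * Complex.I * ((2 * q + 1 : ℤ) : ℂ)))
          = (k : ℂ) * (2 * Real.pi * Complex.I) * (N : ℂ) := by
        rw [← hk]
        field_simp
      have h3 : (Real.pi : ℂ) * Complex.I * (-((m : ℂ) * ((2 * q + 1 : ℤ) : ℂ)))
          = (Real.pi : ℂ) * Complex.I * ((k : ℂ) * 2 * (N : ℂ)) := by
        linear_combination h2
      exact mul_left_cancel₀ (mul_ne_zero hπ hI) h3
    have hZ : -((m : ℤ) * (2 * q + 1)) = k * 2 * (N : ℤ) := by exact_mod_cast hC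
    have hLNz : (L : ℤ) * (Ntil : ℤ) = 2 * (N : ℤ) := by exact_mod_cast hLN
    have hpmz : (p : ℤ) * (m : ℤ) = (Ntil : ℤ) := by exact_mod_cast hpm
    have hfin : (L : ℤ) * (m : ℤ) * (qt + k * p) = 0 := by
      linear_combination (m : ℤ) * hq - hZ + k * hLNz + k * (L : ℤ) * hpmz
    have hL0 : (L : ℤ) ≠ 0 := by exact_mod_cast (by omega : L ≠ 0)
    have hm0' : (m : ℤ) ≠ 0 := by exact_mod_cast hm0.ne'
    have h4 : qt + k * p = 0 := by
      rcases mul_eq_zero.mp hfin with h1 | h1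
      · exact absurd h1 (mul_ne_zero hL0 hm0')
      · exact h1
    exact hpqt ⟨-k, by linarith⟩
  -- fold the sum
  have hmodpow : ∀ k : ℕ, ω ^ (k % Ntil) = ω ^ k := by
    intro k
    conv_rhs => rw [← Nat.div_add_mod k Ntil]
    rw [pow_add, pow_mul, hωN, one_pow, one_mul]
  have hinner : ∀ k ∈ Finset.range N,
      (∑ l ∈ Finset.range Ntil, if k % Ntil = l then ((pad n k : ℤ) : ℂ) * ω ^ l else 0)
        = ((pad n k : ℤ) : ℂ) * ω ^ k := by
    intro k _
    rw [Finset.sum_ite_eq, if_pos (Finset.mem_range.mpr (Nat.mod_lt _ hNtil0)), hmodpow]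
  have hfold : ∑ l ∈ Finset.range Ntil, (y l : ℂ) * ω ^ l
      = ∑ j : Fin N, (n j : ℂ) * ω ^ (j : ℕ) := by
    calc ∑ l ∈ Finset.range Ntil, (y l : ℂ) * ω ^ l
        = ∑ l ∈ Finset.range Ntil, ∑ k ∈ Finset.range N,
            (if k % Ntil = l then ((pad n k : ℤ) : ℂ) * ω ^ l else 0) := by
          apply Finset.sum_congr rfl; intro l _
          rw [hy l, Int.cast_sum, Finset.sum_mul]
          apply Finset.sum_congr rfl; intro k _
          split <;> simp
      _ = ∑ k ∈ Finset.range N, ∑ l ∈ Finset.range Ntil,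
            (if k % Ntil = l then ((pad n k : ℤ) : ℂ) * ω ^ l else 0) := Finset.sum_comm
      _ = ∑ k ∈ Finset.range N, ((pad n k : ℤ) : ℂ) * ω ^ k := Finset.sum_congr rfl hinner
      _ = ∑ j : Fin N, (n j : ℂ) * ω ^ (j : ℕ) := by
          rw [← Fin.sum_univ_eq_sum_range (fun k => ((pad n k : ℤ) : ℂ) * ω ^ k) N]
          apply Finset.sum_congr rfl; intro j _
          simp [pad]
  -- split and vanish
  have hgeom : ∑ b ∈ Finset.range p, (ω ^ m) ^ b = 0 := by
    rw [geom_sum_eq hωm, ← pow_mul, Nat.mul_comm m p, hpm, hωN, sub_self, zero_div]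
  calc ∑ j : Fin N, (n j : ℂ) *
      Complex.exp (-((Real.pi : ℂ) * Complex.I * ((2 * q + 1 : ℤ) : ℂ) * ((j : ℕ) : ℂ)) / (N : ℂ))
      = ∑ j : Fin N, (n j : ℂ) * ω ^ (j : ℕ) := by
        apply Finset.sum_congr rfl; intro j _; rw [hterm]
    _ = ∑ l ∈ Finset.range Ntil, (y l : ℂ) * ω ^ l := hfold.symm
    _ = ∑ b ∈ Finset.range p, ∑ a ∈ Finset.range m, (y (m * b + a) : ℂ) * ω ^ (m * b + a) := by
        rw [← hpm, sum_range_mul']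
    _ = ∑ b ∈ Finset.range p, ∑ a ∈ Finset.range m, ((y a : ℂ) * ω ^ a) * (ω ^ m) ^ b := by
        apply Finset.sum_congr rfl; intro b hb
        apply Finset.sum_congr rfl; intro a ha
        simp only [Finset.mem_range] at hb ha
        have hlt : m * b + a < Ntil := by
          calc m * b + a < m * b + m := by omega
          _ = m * (b + 1) := by ring
          _ ≤ m * p := Nat.mul_le_mul_left _ (by omega)
          _ = Ntil := by rw [Nat.mul_comm]; exact hpm
        have hmod : (m * b + a) % (Ntil / p) = a := by
          rw [← hm, Nat.add_comm, Nat.add_mul_mod_self_left, Nat.mod_eq_of_lt ha]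
        rw [h _ hlt, hmod, pow_add, pow_mul]
        ring
    _ = (∑ b ∈ Finset.range p, (ω ^ m) ^ b) * (∑ a ∈ Finset.range m, (y a : ℂ) * ω ^ a) := by
        rw [Finset.sum_mul_sum]
        apply Finset.sum_congr rfl; intro b _
        apply Finset.sum_congr rfl; intro a _
        ring
    _ = 0 := by rw [hgeom, zero_mul]
end

section
/- Let N ≥ 1. The set S = { n ∈ ℤ^N : Σ_{p=0}^{N-1} n_p · exp(-iπ p / N) = 0 } is a ℤ-submodule of ℤ^N that is free of rank N - φ(2N), where φ is Euler's totient function. -/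
open Polynomial Complex Submodule

theorem negacyclic_kernel_free_rank (N : ℕ) (hN : 1 ≤ N) :
    ∃ S : Submodule ℤ (Fin N → ℤ),
      (S : Set (Fin N → ℤ)) =
        {n : Fin N → ℤ | ∑ p : Fin N, (n p : ℂ) *
          Complex.exp (-((Real.pi : ℂ) * Complex.I * ((p : ℕ) : ℂ)) / (N : ℂ)) = 0} ∧
      Module.Free ℤ S ∧ Module.finrank ℤ S = N - Nat.totient (2 * N) := by
  obtain ⟨ζ, hζdef⟩ : ∃ z : ℂ, z = Complex.exp (-((Real.pi : ℂ) * Complex.I) / (N : ℂ)) :=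
    ⟨_, rfl⟩
  have hN0 : (N : ℂ) ≠ 0 := Nat.cast_ne_zero.mpr (by omega)
  have h2N : 0 < 2 * N := by omega
  -- ζ is a primitive 2N-th root of unity
  have hζ : IsPrimitiveRoot ζ (2 * N) := by
    have h1 : IsPrimitiveRoot (Complex.exp (2 * Real.pi * Complex.I / ((2 * N : ℕ) : ℂ))) (2 * N) :=
      Complex.isPrimitiveRoot_exp _ (by omega)
    have hpow : Complex.exp (2 * Real.pi * Complex.I / ((2 * N : ℕ) : ℂ)) ^ (2 * N - 1) = ζ := by
      rw [hζdef, ← Complex.exp_nat_mul]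
      have h2 : ((2 * N - 1 : ℕ) : ℂ) * (2 * Real.pi * Complex.I / ((2 * N : ℕ) : ℂ)) =
          2 * Real.pi * Complex.I + -((Real.pi : ℂ) * Complex.I) / (N : ℂ) := by
        have h3 : ((2 * N - 1 : ℕ) : ℂ) = 2 * (N : ℂ) - 1 := by
          push_cast [Nat.cast_sub (by omega : 1 ≤ 2 * N)]; ring
        rw [h3]; field_simp; push_cast; ring
      rw [h2, Complex.exp_add, Complex.exp_two_pi_mul_I, one_mul]
    have hcop : (2 * N - 1).Coprime (2 * N) := by
      obtain ⟨m, hm⟩ : ∃ m, 2 * N = m + 1 := ⟨2 * N - 1, by omega⟩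
      rw [hm, Nat.add_sub_cancel, add_comm, Nat.coprime_add_self_right]
      exact Nat.coprime_one_right _
    rw [← hpow]
    exact (h1.pow_iff_coprime h2N _).mpr hcop
  -- powers of ζ
  have hz : ∀ p : ℕ, Complex.exp (-((Real.pi : ℂ) * Complex.I * (p : ℂ)) / (N : ℂ)) = ζ ^ p := by
    intro p
    rw [hζdef, ← Complex.exp_nat_mul]
    congr 1
    ring
  -- the linear map
  set v : Fin N → ℂ := fun p => ζ ^ (p : ℕ) with hv
  set f : (Fin N → ℤ) →ₗ[ℤ] ℂ := Fintype.linearCombination ℤ v with hf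
  refine ⟨LinearMap.ker f, ?_, ?_, ?_⟩
  · ext n
    simp only [SetLike.mem_coe, LinearMap.mem_ker, Set.mem_setOf_eq, hf,
      Fintype.linearCombination_apply, hv, hz, zsmul_eq_mul]
  · infer_instance
  · -- rank computation
    set d := Nat.totient (2 * N) with hd
    -- degree facts
    have hminQ : minpoly ℚ ζ = cyclotomic (2 * N) ℚ := (cyclotomic_eq_minpoly_rat hζ h2N).symm
    have hdegQ : (minpoly ℚ ζ).natDegree = d := by rw [hminQ, natDegree_cyclotomic]
    have hminZ : minpoly ℤ ζ = cyclotomic (2 * N) ℤ := (cyclotomic_eq_minpoly hζ h2N).symm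
    have hdegZ : (minpoly ℤ ζ).natDegree = d := by rw [hminZ, natDegree_cyclotomic]
    -- d ≤ N
    have hζN : ζ ^ N = -1 := by
      rw [hζdef, ← Complex.exp_nat_mul]
      have : (N : ℂ) * (-((Real.pi : ℂ) * Complex.I) / (N : ℂ)) = -(Real.pi * Complex.I) := by
        field_simp
      rw [this, Complex.exp_neg, Complex.exp_pi_mul_I]
      norm_num
    have hdle : d ≤ N := by
      have hdvd : minpoly ℚ ζ ∣ X ^ N + 1 := by
        apply minpoly.dvd
        simp [hζN]
      have hXC : (X ^ N + 1 : ℚ[X]) = X ^ N + C 1 := by rw [map_one]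
      have hne : (X ^ N + 1 : ℚ[X]) ≠ 0 := by
        rw [hXC]; exact X_pow_add_C_ne_zero (by omega) 1
      calc d = (minpoly ℚ ζ).natDegree := hdegQ.symm
        _ ≤ (X ^ N + 1 : ℚ[X]).natDegree := natDegree_le_of_dvd hdvd hne
        _ = N := by rw [hXC, natDegree_X_pow_add_C]
    -- linear independence of low powers over ℤ
    have liQ : LinearIndependent ℚ fun i : Fin d => ζ ^ (i : ℕ) := by
      have := linearIndependent_pow (K := ℚ) (S := ℂ) ζ
      rwa [hdegQ] at this
    have liZ : LinearIndependent ℤ fun i : Fin d => ζ ^ (i : ℕ) :=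
      liQ.restrict_scalars (smul_left_injective ℤ one_ne_zero)
    -- span equality
    have hkey : span ℤ ((Finset.image (ζ ^ ·) (Finset.range d) : Finset ℂ) : Set ℂ) =
        Subalgebra.toSubmodule (Algebra.adjoin ℤ {ζ}) := by
      have := Submodule.span_range_natDegree_eq_adjoin (R := ℤ) (A := ℂ)
        (minpoly.monic (hζ.isIntegral h2N)) (minpoly.aeval ℤ ζ)
      rwa [hdegZ] at this
    have hspan : span ℤ (Set.range v) = span ℤ (Set.range fun i : Fin d => ζ ^ (i : ℕ)) := by
      apply le_antisymm
      · rw [span_le]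
        rintro _ ⟨p, rfl⟩
        have hmem : v p ∈ Subalgebra.toSubmodule (Algebra.adjoin ℤ {ζ}) := by
          simp only [Subalgebra.mem_toSubmodule, hv]
          exact pow_mem (Algebra.self_mem_adjoin_singleton ℤ ζ) _
        rw [← hkey] at hmem
        refine span_le.mpr ?_ hmem
        intro x hx
        simp only [Finset.coe_image, Set.mem_image, Finset.mem_coe, Finset.mem_range] at hx
        obtain ⟨k, hk, rfl⟩ := hx
        exact subset_span ⟨⟨k, hk⟩, rfl⟩
      · rw [span_le]
        rintro _ ⟨i, rfl⟩
        exact subset_span ⟨⟨(i : ℕ), lt_of_lt_of_le i.2 hdle⟩, rfl⟩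
    -- rank of the range
    have hrange : LinearMap.range f = span ℤ (Set.range v) :=
      Fintype.range_linearCombination ℤ v
    have hrankrange : Module.rank ℤ (LinearMap.range f) = d := by
      rw [hrange, hspan]
      have b := Module.Basis.span liZ
      rw [← b.mk_eq_rank'', Cardinal.mk_fin]
    -- rank-nullity
    have hrn := LinearMap.rank_range_add_rank_ker f
    rw [hrankrange, rank_fin_fun] at hrn
    have hfr : (Module.finrank ℤ (LinearMap.ker f) : Cardinal) =
        Module.rank ℤ (LinearMap.ker f) := Module.finrank_eq_rank ℤ _
    rw [← hfr] at hrn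
    have : d + Module.finrank ℤ (LinearMap.ker f) = N := by
      exact_mod_cast hrn
    omega
end

section
/- Let N ≥ 1 and let q be an integer with K = gcd(N, q) > 1, and let p be a prime dividing N/K. Let n ∈ ℤ^N and define the folded coefficients y_l = Σ_{k=0}^{K-1} n_{l + k·(N/K)} for 0 ≤ l < N/K. If y_l = y_{l mod (N/(Kp))} for all 0 ≤ l < N/K, then Σ_{j=0}^{N-1} n_j · exp(-2πi q j / N) = 0. -/
lemma sum_range_mul_eq {β : Type*} [AddCommMonoid β] (f : ℕ → β) (a b : ℕ) :
    ∑ j ∈ Finset.range (a * b), f j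
      = ∑ k ∈ Finset.range a, ∑ l ∈ Finset.range b, f (l + k * b) := by
  induction a with
  | zero => simp
  | succ a ih =>
    rw [Nat.succ_mul, Finset.sum_range_add, ih, Finset.sum_range_succ]
    congr 1
    exact Finset.sum_congr rfl fun x _ => by rw [Nat.add_comm]

theorem cyclic_folded_solution (N : ℕ) (hN : 1 ≤ N) (q : ℤ)
    (K : ℕ) (hK : K = Int.gcd (N : ℤ) q) (hK1 : 1 < K)
    (p : ℕ) (hp : p.Prime) (hpd : p ∣ N / K)
    (n : Fin N → ℤ)
    (y : ℕ → ℤ) (hy : ∀ l, y l = ∑ k ∈ Finset.range K, pad n (l + k * (N / K)))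
    (h : ∀ l < N / K, y l = y (l % (N / (K * p)))) :
    ∑ j : Fin N, (n j : ℂ) *
      Complex.exp (-(2 * (Real.pi : ℂ) * Complex.I * (q : ℂ) * ((j : ℕ) : ℂ)) / (N : ℂ)) = 0 := by
  have hK0 : 0 < K := by omega
  have hKdN : K ∣ N := by
    have h1 : ((K : ℤ)) ∣ (N : ℤ) := by rw [hK]; exact Int.gcd_dvd_left _ _
    exact_mod_cast h1
  have hKdq : (K : ℤ) ∣ q := by rw [hK]; exact Int.gcd_dvd_right _ _
  set M : ℕ := N / K with hMdef
  have hNKM : N = K * M := (Nat.mul_div_cancel' hKdN).symm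
  have hMpos : 0 < M := Nat.div_pos (Nat.le_of_dvd (by omega) hKdN) hK0
  set m : ℕ := M / p with hmdef
  have hMpm : M = p * m := (Nat.mul_div_cancel' hpd).symm
  have hmpos : 0 < m := by
    rcases Nat.eq_zero_or_pos m with h0 | h0
    · rw [h0, Nat.mul_zero] at hMpm; omega
    · exact h0
  set q' : ℤ := q / K with hq'def
  have hq' : (K : ℤ) * q' = q := Int.mul_ediv_cancel' hKdq
  -- coprimality of M and q'
  have hco : Int.gcd (M : ℤ) q' = 1 := by
    have hg : Int.gcd ((N : ℤ) / Int.gcd (N : ℤ) q) (q / Int.gcd (N : ℤ) q) = 1 :=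
      Int.gcd_div_gcd_div_gcd (by rw [← hK]; exact_mod_cast hK0)
    rw [← hK] at hg
    have hNdiv : (N : ℤ) / (K : ℤ) = (M : ℤ) := by
      rw [hNKM]; push_cast
      exact Int.mul_ediv_cancel_left _ (by exact_mod_cast hK0.ne')
    rw [hNdiv] at hg
    exact hg
  -- complex number facts
  have hKC : (K : ℂ) ≠ 0 := Nat.cast_ne_zero.mpr hK0.ne'
  have hMC : (M : ℂ) ≠ 0 := Nat.cast_ne_zero.mpr hMpos.ne'
  have hmC : (m : ℂ) ≠ 0 := Nat.cast_ne_zero.mpr hmpos.ne'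
  have hpC : (p : ℂ) ≠ 0 := Nat.cast_ne_zero.mpr hp.pos.ne'
  have hNC : (N : ℂ) ≠ 0 := Nat.cast_ne_zero.mpr (by omega)
  have hNCeq : (N : ℂ) = (K : ℂ) * ((p : ℂ) * (m : ℂ)) := by
    rw [hNKM, hMpm]; push_cast; ring
  have hqCeq : (q : ℂ) = (K : ℂ) * (q' : ℂ) := by exact_mod_cast congrArg Int.cast hq'.symm
  have htpI : (2 * (Real.pi : ℂ) * Complex.I) ≠ 0 := by
    apply mul_ne_zero (mul_ne_zero two_ne_zero _) Complex.I_ne_zero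
    exact_mod_cast Real.pi_ne_zero
  set c : ℂ := -(2 * (Real.pi : ℂ) * Complex.I * (q : ℂ)) / (N : ℂ) with hc
  have hMc : (M : ℂ) * c = ((-q' : ℤ) : ℂ) * (2 * (Real.pi : ℂ) * Complex.I) := by
    rw [hc, hNCeq, hqCeq, hMpm]
    push_cast
    field_simp
  have hmc : (m : ℂ) * c = -(2 * (Real.pi : ℂ) * Complex.I * (q' : ℂ)) / (p : ℂ) := by
    rw [hc, hNCeq, hqCeq]
    field_simp
  have hwM : Complex.exp c ^ M = 1 := by
    rw [← Complex.exp_nat_mul, hMc, Complex.exp_int_mul_two_pi_mul_I]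
  have hwm : Complex.exp c ^ m ≠ 1 := by
    rw [← Complex.exp_nat_mul, hmc]
    intro hone
    rw [Complex.exp_eq_one_iff] at hone
    obtain ⟨k, hk⟩ := hone
    rw [div_eq_iff hpC] at hk
    have h4 : (2 * (Real.pi : ℂ) * Complex.I) * (-(q' : ℂ))
        = (2 * (Real.pi : ℂ) * Complex.I) * ((k : ℂ) * (p : ℂ)) := by
      linear_combination hk
    have h5 : (-(q' : ℂ)) = ((k : ℂ) * (p : ℂ)) := mul_left_cancel₀ htpI h4
    have h6 : -q' = k * (p : ℤ) := by exact_mod_cast h5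
    have hdq' : (p : ℤ) ∣ q' := ⟨-k, by linear_combination -h6⟩
    have hpM : (p : ℤ) ∣ (M : ℤ) := Int.natCast_dvd_natCast.mpr hpd
    have hd1 : (p : ℤ) ∣ (Int.gcd (M : ℤ) q' : ℤ) := Int.dvd_coe_gcd hpM hdq'
    rw [hco] at hd1
    have := Int.le_of_dvd one_pos hd1
    have := hp.two_le
    omega
  -- Step A: rewrite the sum over Fin N
  have stepA : (∑ j : Fin N, (n j : ℂ) *
      Complex.exp (-(2 * (Real.pi : ℂ) * Complex.I * (q : ℂ) * ((j : ℕ) : ℂ)) / (N : ℂ)))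
      = ∑ j ∈ Finset.range N, ((pad n j : ℤ) : ℂ) * Complex.exp c ^ j := by
    rw [← Fin.sum_univ_eq_sum_range (fun j => ((pad n j : ℤ) : ℂ) * Complex.exp c ^ j) N]
    apply Finset.sum_congr rfl
    intro j _
    have h1 : pad n (j : ℕ) = n j := by simp [pad, j.isLt]
    rw [h1, ← Complex.exp_nat_mul]
    congr 1
    rw [hc]
    ring
  -- Step B: fold to sums over M
  have stepB : (∑ j ∈ Finset.range N, ((pad n j : ℤ) : ℂ) * Complex.exp c ^ j)
      = ∑ l ∈ Finset.range M, ((y l : ℤ) : ℂ) * Complex.exp c ^ l := by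
    rw [show Finset.range N = Finset.range (K * M) from by rw [← hNKM]]
    rw [sum_range_mul_eq, Finset.sum_comm]
    apply Finset.sum_congr rfl
    intro l _
    have : ∀ k ∈ Finset.range K,
        ((pad n (l + k * M) : ℤ) : ℂ) * Complex.exp c ^ (l + k * M)
        = ((pad n (l + k * M) : ℤ) : ℂ) * Complex.exp c ^ l := by
      intro k _
      rw [pow_add, Nat.mul_comm k M, pow_mul, hwM, one_pow, mul_one]
    rw [Finset.sum_congr rfl this, ← Finset.sum_mul]
    congr 1
    rw [hy l]
    push_cast
    rfl
  -- Step C: use periodicity and vanishing geometric sum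
  have hmN : N / (K * p) = m := by rw [← Nat.div_div_eq_div_mul]
  have stepC : (∑ l ∈ Finset.range M, ((y l : ℤ) : ℂ) * Complex.exp c ^ l) = 0 := by
    rw [show Finset.range M = Finset.range (p * m) from by rw [← hMpm]]
    rw [sum_range_mul_eq]
    have key : ∀ s ∈ Finset.range p, ∀ r ∈ Finset.range m,
        ((y (r + s * m) : ℤ) : ℂ) * Complex.exp c ^ (r + s * m)
        = (Complex.exp c ^ m) ^ s * (((y r : ℤ) : ℂ) * Complex.exp c ^ r) := by
      intro s hs r hr
      rw [Finset.mem_range] at hs hr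
      have hlt : r + s * m < M := by
        calc r + s * m < m + s * m := by omega
        _ = (s + 1) * m := by ring
        _ ≤ p * m := Nat.mul_le_mul_right m (by omega)
        _ = M := hMpm.symm
      have hyr : y (r + s * m) = y r := by
        rw [h (r + s * m) hlt, hmN, Nat.add_mul_mod_self_right, Nat.mod_eq_of_lt hr]
      rw [hyr, pow_add, Nat.mul_comm s m, pow_mul]
      ring
    calc ∑ s ∈ Finset.range p, ∑ r ∈ Finset.range m,
          ((y (r + s * m) : ℤ) : ℂ) * Complex.exp c ^ (r + s * m)
        = ∑ s ∈ Finset.range p, (Complex.exp c ^ m) ^ s *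
            (∑ r ∈ Finset.range m, ((y r : ℤ) : ℂ) * Complex.exp c ^ r) := by
          apply Finset.sum_congr rfl
          intro s hs
          rw [Finset.mul_sum]
          exact Finset.sum_congr rfl (fun r hr => key s hs r hr)
      _ = (∑ s ∈ Finset.range p, (Complex.exp c ^ m) ^ s) *
            (∑ r ∈ Finset.range m, ((y r : ℤ) : ℂ) * Complex.exp c ^ r) := by
          rw [Finset.sum_mul]
      _ = 0 := by
          rw [geom_sum_eq hwm p, ← pow_mul, Nat.mul_comm m p, ← hMpm, hwM]
          simp
  rw [stepA, stepB, stepC]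
end

section
/- Let N ≥ 1 and let q be an integer; set K = gcd(N, q) and Ñ = N/K, and assume Ñ is even but not a power of 2. Let p be an odd prime dividing Ñ/2, and write M = Ñ/2. Let n ∈ ℤ^N, define y_l = Σ_{k=0}^{K-1} n_{l + kÑ} for 0 ≤ l < Ñ, and define z_l = y_l - y_{l + M} for 0 ≤ l < M. If z_j = (-1)^{⌊ j·p / M ⌋} · z_{j mod (M/p)} for all 0 ≤ j < M, then Σ_{j=0}^{N-1} n_j · exp(-2πi q j / N) = 0. -/
lemma my_sum_range_mul {β : Type*} [AddCommMonoid β] (f : ℕ → β) (a b : ℕ) :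
    ∑ j ∈ Finset.range (a * b), f j
      = ∑ k ∈ Finset.range a, ∑ l ∈ Finset.range b, f (k * b + l) := by
  induction a with
  | zero => simp
  | succ a ih =>
    have hb : (a + 1) * b - a * b = b := by rw [Nat.succ_mul]; omega
    rw [Finset.sum_range_succ, ← ih, Finset.range_eq_Ico,
      ← Finset.sum_Ico_consecutive f (Nat.zero_le (a * b))
        (Nat.mul_le_mul_right b (Nat.le_succ a)), ← Finset.range_eq_Ico,
      Finset.sum_Ico_eq_sum_range, hb]

theorem cyclic_case_three_solution (N : ℕ) (hN : 1 ≤ N) (q : ℤ)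
    (K Ntil M : ℕ) (hK : K = Int.gcd (N : ℤ) q) (hNtil : Ntil = N / K)
    (hEven : Even Ntil) (hNotPow : ¬ ∃ m : ℕ, Ntil = 2 ^ m)
    (hM : M = Ntil / 2)
    (p : ℕ) (hp : p.Prime) (hpodd : Odd p) (hpd : p ∣ Ntil / 2)
    (n : Fin N → ℤ)
    (y : ℕ → ℤ) (hy : ∀ l, y l = ∑ k ∈ Finset.range K, pad n (l + k * Ntil))
    (z : ℕ → ℤ) (hz : ∀ l, z l = y l - y (l + M))
    (h : ∀ j < M, z j = (-1 : ℤ) ^ (j * p / M) * z (j % (M / p))) :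
    ∑ j : Fin N, (n j : ℂ) *
      Complex.exp (-(2 * (Real.pi : ℂ) * Complex.I * (q : ℂ) * ((j : ℕ) : ℂ)) / (N : ℂ)) = 0 := by
  have hNpos : 0 < N := hN
  have hK0 : 0 < K := by
    rw [hK]; exact Int.gcd_pos_iff.mpr (Or.inl (by exact_mod_cast hNpos.ne'))
  have hKN : K ∣ N := by
    have : (K : ℤ) ∣ (N : ℤ) := hK ▸ Int.gcd_dvd_left _ _
    exact_mod_cast this
  have hKq : (K : ℤ) ∣ q := hK ▸ Int.gcd_dvd_right _ _
  have hNeq : N = K * Ntil := by rw [hNtil, Nat.mul_div_cancel' hKN]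
  set qt : ℤ := q / K with hqt
  have hq : q = K * qt := (Int.mul_ediv_cancel' hKq).symm
  have hcop : Int.gcd (Ntil : ℤ) qt = 1 := by
    have := Int.gcd_div_gcd_div_gcd (i := (N : ℤ)) (j := q) (by rw [← hK]; exact_mod_cast hK0)
    have hNdiv : (N : ℤ) / Int.gcd (N : ℤ) q = (Ntil : ℤ) := by
      rw [← hK]
      rw [hNeq]
      push_cast
      rw [Int.mul_ediv_cancel_left _ (by exact_mod_cast hK0.ne')]
    rwa [hNdiv, ← hK, ← hqt] at this
  have hcop' : IsCoprime (Ntil : ℤ) qt := Int.isCoprime_iff_gcd_eq_one.mpr hcop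
  have hNtil0 : 0 < Ntil := by
    rcases Nat.eq_zero_or_pos Ntil with h0 | h0
    · rw [h0, mul_zero] at hNeq; omega
    · exact h0
  have hNtil2M : Ntil = 2 * M := by
    obtain ⟨t, ht⟩ := hEven
    omega
  have hMpos : 0 < M := by omega
  have hpM : p ∣ M := hM ▸ hpd
  set m : ℕ := M / p with hmdef
  have hMm : M = p * m := (Nat.mul_div_cancel' hpM).symm
  have hp2 : 2 ≤ p := hp.two_le
  have hm0 : 0 < m := by
    rcases Nat.eq_zero_or_pos m with h0 | h0
    · rw [h0, mul_zero] at hMm; omega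
    · exact h0
  have hqtodd : Odd qt := by
    rcases Int.even_or_odd qt with he | ho
    · exfalso
      obtain ⟨t, ht⟩ := hEven
      have h2N : (2 : ℤ) ∣ (Ntil : ℤ) := by
        have : (2 : ℕ) ∣ Ntil := ⟨t, by omega⟩
        exact_mod_cast this
      have h2q : (2 : ℤ) ∣ qt := he.two_dvd
      have := hcop'.isUnit_of_dvd' h2N h2q
      rw [Int.isUnit_iff] at this
      omega
    · exact ho
  have hNC : (N : ℂ) ≠ 0 := by exact_mod_cast hNpos.ne'
  have hNint : (N : ℂ) = (K : ℂ) * (Ntil : ℂ) := by exact_mod_cast congrArg (Nat.cast : ℕ → ℂ) hNeq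
  have hqint : (q : ℂ) = (K : ℂ) * (qt : ℂ) := by exact_mod_cast congrArg (Int.cast : ℤ → ℂ) hq
  have hKC : (K : ℂ) ≠ 0 := by exact_mod_cast hK0.ne'
  have hNtilC : (Ntil : ℂ) ≠ 0 := by exact_mod_cast hNtil0.ne'
  set c : ℂ := -(2 * (Real.pi : ℂ) * Complex.I * (q : ℂ)) / (N : ℂ) with hc
  set ζ : ℂ := Complex.exp c with hζ
  have hpow : ∀ k : ℕ, ζ ^ k = Complex.exp ((k : ℂ) * c) := fun k =>
    (Complex.exp_nat_mul c k).symm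
  -- Fact A : ζ ^ Ntil = 1
  have hA : ζ ^ Ntil = 1 := by
    rw [hpow]
    have : (Ntil : ℂ) * c = (-qt : ℤ) * (2 * (Real.pi : ℂ) * Complex.I) := by
      rw [hc]
      field_simp
      rw [hqint, hNint]
      push_cast
      ring
    rw [this, Complex.exp_int_mul_two_pi_mul_I]
  -- Fact B : ζ ^ M = -1
  have hB : ζ ^ M = -1 := by
    rw [hpow]
    have harg : (M : ℂ) * c = (-qt : ℤ) * ((Real.pi : ℂ) * Complex.I) := by
      rw [hc]
      have hM2 : (Ntil : ℂ) = 2 * (M : ℂ) := by exact_mod_cast congrArg (Nat.cast : ℕ → ℂ) hNtil2M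
      field_simp
      rw [hqint, hNint, hM2]
      push_cast
      ring
    rw [harg, Complex.exp_int_mul, Complex.exp_pi_mul_I]
    exact Odd.neg_one_zpow (by exact hqtodd.neg)
  -- Fact C : ζ ^ (2 * m) ≠ 1
  have hC : ζ ^ (2 * m) ≠ 1 := by
    intro hcon
    rw [hpow, Complex.exp_eq_one_iff] at hcon
    obtain ⟨t, ht⟩ := hcon
    rw [hc] at ht
    have hπI : (2 * (Real.pi : ℂ) * Complex.I) ≠ 0 := by
      simp [Real.pi_ne_zero, Complex.I_ne_zero]
    have key : -(2 * (m : ℂ)) * (q : ℂ) = (t : ℂ) * (N : ℂ) := by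
      have hh := ht
      push_cast at hh
      field_simp at hh
      have h2 : (-(2 * (m : ℂ)) * (q : ℂ)) * (2 * (Real.pi : ℂ) * Complex.I)
          = ((t : ℂ) * (N : ℂ)) * (2 * (Real.pi : ℂ) * Complex.I) := by
        linear_combination (2 * (Real.pi : ℂ) * Complex.I) * hh
      exact mul_right_cancel₀ hπI h2
    have keyZ : -(2 * (m : ℤ)) * q = t * N := by exact_mod_cast key
    rw [hq, hNeq] at keyZ
    push_cast at keyZ
    have keyZ2 : -(2 * m : ℤ) * qt = t * Ntil := by
      have hKZ : (K : ℤ) ≠ 0 := by exact_mod_cast hK0.ne'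
      apply mul_left_cancel₀ hKZ
      linear_combination keyZ
    have hdvd : (Ntil : ℤ) ∣ (2 * m : ℤ) * qt := ⟨-t, by linarith [keyZ2]⟩
    have hdvd2 : (Ntil : ℤ) ∣ (2 * m : ℤ) := hcop'.dvd_of_dvd_mul_right hdvd
    have hdvdN : Ntil ∣ 2 * m := by exact_mod_cast hdvd2
    have hlt : 2 * m < Ntil := by
      rw [hNtil2M, hMm]
      nlinarith [hm0, hp2]
    have := Nat.le_of_dvd (by omega) hdvdN
    omega
  -- ζ ^ m ≠ -1
  have hCm : -ζ ^ m ≠ 1 := by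
    intro hcon
    apply hC
    have : ζ ^ m = -1 := by linear_combination -hcon
    rw [two_mul, pow_add, this]
    ring
  -- geometric sum vanishes
  have hgeom : ∑ a ∈ Finset.range p, (-ζ ^ m) ^ a = 0 := by
    rw [geom_sum_eq (by simpa using hCm) p]
    have : (-ζ ^ m) ^ p = 1 := by
      rw [neg_pow, hpodd.neg_one_pow, ← pow_mul, mul_comm m p, ← hMm, hB]
      ring
    rw [this]
    simp
  -- rewrite the main sum
  have hterm : ∀ j : ℕ,
      Complex.exp (-(2 * (Real.pi : ℂ) * Complex.I * (q : ℂ) * (j : ℂ)) / (N : ℂ)) = ζ ^ j := by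
    intro j
    rw [hpow]
    congr 1
    rw [hc]
    ring
  have step0 : ∑ j : Fin N, (n j : ℂ) *
      Complex.exp (-(2 * (Real.pi : ℂ) * Complex.I * (q : ℂ) * ((j : ℕ) : ℂ)) / (N : ℂ))
      = ∑ j ∈ Finset.range N, ((pad n j : ℤ) : ℂ) * ζ ^ j := by
    rw [← Fin.sum_univ_eq_sum_range (fun j => (Int.cast (pad n j) * ζ ^ j : ℂ)) N]
    refine Finset.sum_congr rfl fun j _ => ?_
    have hpj : pad n (j : ℕ) = n j := by simp [pad, j.isLt]
    rw [hterm j, hpj]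
  have step1 : ∑ j ∈ Finset.range N, ((pad n j : ℤ) : ℂ) * ζ ^ j
      = ∑ l ∈ Finset.range Ntil, (y l : ℂ) * ζ ^ l := by
    rw [show Finset.range N = Finset.range (K * Ntil) from by rw [← hNeq],
      my_sum_range_mul, Finset.sum_comm]
    refine Finset.sum_congr rfl fun l _ => ?_
    rw [hy l]
    push_cast
    rw [Finset.sum_mul]
    refine Finset.sum_congr rfl fun k _ => ?_
    rw [add_comm l (k * Ntil), pow_add, pow_mul', hA, one_pow, one_mul]
  have step2 : ∑ l ∈ Finset.range Ntil, (y l : ℂ) * ζ ^ l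
      = ∑ l ∈ Finset.range M, (z l : ℂ) * ζ ^ l := by
    rw [hNtil2M, my_sum_range_mul, Finset.sum_range_succ, Finset.sum_range_succ,
      Finset.sum_range_zero, zero_add, ← Finset.sum_add_distrib]
    refine Finset.sum_congr rfl fun l hl => ?_
    rw [hz l]
    push_cast
    have h1 : (0 : ℕ) * M + l = l := by omega
    have h2 : (1 : ℕ) * M + l = M + l := by omega
    rw [h1, h2, pow_add, hB, add_comm l M]
    ring
  have step3 : ∑ l ∈ Finset.range M, (z l : ℂ) * ζ ^ l
      = (∑ a ∈ Finset.range p, (-ζ ^ m) ^ a) * ∑ r ∈ Finset.range m, (z r : ℂ) * ζ ^ r := by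
    rw [hMm, my_sum_range_mul, Finset.sum_mul]
    refine Finset.sum_congr rfl fun a ha => ?_
    rw [Finset.mul_sum]
    refine Finset.sum_congr rfl fun r hr => ?_
    rw [Finset.mem_range] at ha hr
    have hjM : a * m + r < M := by
      rw [hMm]
      calc a * m + r < a * m + m := by omega
        _ = (a + 1) * m := by ring
        _ ≤ p * m := Nat.mul_le_mul_right m (by omega)
    have hdiv : (a * m + r) * p / M = a := by
      rw [hMm]
      have h1 : (a * m + r) * p = r * p + p * m * a := by ring
      rw [h1, Nat.add_mul_div_left _ _ (show 0 < p * m by positivity),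
        Nat.div_eq_of_lt (by nlinarith), zero_add]
    have hmod : (a * m + r) % (M / p) = r := by
      rw [← hmdef, add_comm (a * m) r, Nat.add_mul_mod_self_right, Nat.mod_eq_of_lt hr]
    rw [h (a * m + r) hjM, hdiv, hmod]
    push_cast
    rw [pow_add, mul_comm a m, pow_mul, neg_pow]
    ring
  rw [step0, step1, step2, step3, hgeom, zero_mul]
end

section
/- Let N be an odd prime and let q be an integer such that N does not divide 2q+1. Then for every n ∈ ℤ^N: Σ_{p=0}^{N-1} n_p · exp(-iπ (2q+1) p / N) = 0 if and only if n_p = (-1)^p · n_0 for all 0 ≤ p ≤ N-1 (i.e. n_0 = -n_1 = n_2 = -n_3 = … = n_{N-1}). -/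
open Polynomial in
lemma prime_root_sum_eq_zero_iff (N : ℕ) (hN : N.Prime) (ξ : ℂ)
    (hξ : IsPrimitiveRoot ξ N) (m : Fin N → ℚ)
    (h : ∑ p : Fin N, (m p : ℂ) * ξ ^ (p : ℕ) = 0) :
    ∀ p : Fin N, m p = m ⟨0, hN.pos⟩ := by
  haveI : Fact N.Prime := ⟨hN⟩
  set f : ℚ[X] := ∑ p : Fin N, C (m p) * X ^ (p : ℕ) with hf
  have hcoeff : ∀ p : Fin N, f.coeff (p : ℕ) = m p := by
    intro p
    rw [hf, Polynomial.finset_sum_coeff]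
    simp only [coeff_C_mul, coeff_X_pow]
    rw [Finset.sum_eq_single p]
    · simp
    · intro b _ hb
      rw [if_neg (fun h' => hb (Fin.ext h'.symm)), mul_zero]
    · simp
  have haev : Polynomial.aeval ξ f = 0 := by
    rw [hf, map_sum]
    simpa using h
  have hdvd : cyclotomic N ℚ ∣ f := by
    rw [cyclotomic_eq_minpoly_rat hξ hN.pos]
    exact minpoly.dvd ℚ ξ haev
  rcases eq_or_ne f 0 with hf0 | hf0
  · intro p
    have := hcoeff p
    have h0 := hcoeff ⟨0, hN.pos⟩
    rw [hf0] at this h0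
    simp at this h0
    rw [← this]; simpa using h0
  · obtain ⟨g, hg⟩ := hdvd
    have hg0 : g ≠ 0 := by
      rintro rfl; simp at hg; exact hf0 hg
    have hdegf : f.natDegree ≤ N - 1 := by
      rw [hf]
      apply Polynomial.natDegree_sum_le_of_forall_le
      intro p _
      apply (Polynomial.natDegree_C_mul_le _ _).trans
      rw [Polynomial.natDegree_X_pow]
      omega
    have hdegc : (cyclotomic N ℚ).natDegree = N - 1 := by
      rw [natDegree_cyclotomic, Nat.totient_prime hN]
    have hcyc0 : cyclotomic N ℚ ≠ 0 := cyclotomic_ne_zero N ℚ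
    have hdeg : f.natDegree = (cyclotomic N ℚ).natDegree + g.natDegree := by
      rw [hg, Polynomial.natDegree_mul hcyc0 hg0]
    have hgdeg : g.natDegree = 0 := by omega
    obtain ⟨c, rfl⟩ := Polynomial.natDegree_eq_zero.mp hgdeg
    have key : ∀ p : Fin N, m p = c := by
      intro p
      have := hcoeff p
      rw [hg, Polynomial.coeff_mul_C, cyclotomic_prime, Polynomial.finset_sum_coeff] at this
      simp only [coeff_X_pow] at this
      rw [Finset.sum_eq_single (p : ℕ)] at this
      · simpa using this.symm
      · intro b _ hb; rw [if_neg (fun h' => hb h'.symm)]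
      · intro hmem; exact absurd (Finset.mem_range.mpr p.isLt) hmem
    intro p
    rw [key p, key ⟨0, hN.pos⟩]

theorem negacyclic_odd_prime_kernel (N : ℕ) (hN : N.Prime) (hNodd : Odd N)
    (q : ℤ) (hq : ¬ ((N : ℤ) ∣ (2 * q + 1)))
    (n : Fin N → ℤ) :
    (∑ p : Fin N, (n p : ℂ) *
        Complex.exp (-((Real.pi : ℂ) * Complex.I * ((2 * q + 1 : ℤ) : ℂ) * ((p : ℕ) : ℂ)) / (N : ℂ))
        = 0)
      ↔ ∀ p : Fin N, n p = (-1 : ℤ) ^ (p : ℕ) * n ⟨0, hN.pos⟩ := by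
  obtain ⟨k, hk⟩ := hNodd
  set c : ℤ := 2 * q + 1 with hc
  set j : ℤ := (k : ℤ) - q with hj
  have hN0 : (N : ℂ) ≠ 0 := Nat.cast_ne_zero.mpr hN.pos.ne'
  have h2j : 2 * j = (N : ℤ) - c := by rw [hj, hc, hk]; push_cast; ring
  have hNj : ¬ (N : ℤ) ∣ j := by
    intro hd
    apply hq
    have : (N : ℤ) ∣ 2 * j := hd.mul_left 2
    rw [h2j] at this
    have := dvd_sub (dvd_refl (N : ℤ)) this
    simpa using this
  set j0 : ℕ := (j % (N : ℤ)).toNat with hj0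
  have hNpos : (0 : ℤ) < (N : ℤ) := by exact_mod_cast hN.pos
  have hj0eq : (j0 : ℤ) = j % (N : ℤ) := Int.toNat_of_nonneg (Int.emod_nonneg j hNpos.ne')
  have hj0rel : (j0 : ℤ) = j - (N : ℤ) * (j / (N : ℤ)) := by rw [hj0eq, Int.emod_def]
  have hcop : j0.Coprime N := by
    rw [Nat.coprime_comm]
    apply (Nat.Prime.coprime_iff_not_dvd hN).mpr
    intro hd
    apply hNj
    have : (N : ℤ) ∣ (j0 : ℤ) := Int.natCast_dvd_natCast.mpr hd
    rw [hj0rel] at this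
    have h2 : (N : ℤ) ∣ (j - (N : ℤ) * (j / (N : ℤ))) + (N : ℤ) * (j / (N : ℤ)) :=
      dvd_add this (dvd_mul_right _ _)
    simpa using h2
  set ξ : ℂ := Complex.exp (2 * (Real.pi : ℂ) * Complex.I * ((j0 : ℂ) / (N : ℂ))) with hξdef
  have hξ : IsPrimitiveRoot ξ N :=
    Complex.isPrimitiveRoot_exp_of_coprime j0 N hN.pos.ne' hcop
  -- key exponential identity
  have hζξ : Complex.exp (-((Real.pi : ℂ) * Complex.I * (c : ℂ)) / (N : ℂ)) = -ξ := by
    have hexp : -((Real.pi : ℂ) * Complex.I * (c : ℂ)) / (N : ℂ) =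
        (Real.pi : ℂ) * Complex.I + 2 * (Real.pi : ℂ) * Complex.I * ((j0 : ℂ) / (N : ℂ))
          + ((j / (N : ℤ) - 1 : ℤ) : ℂ) * (2 * (Real.pi : ℂ) * Complex.I) := by
      have hj0c : (j0 : ℂ) = (j : ℂ) - (N : ℂ) * ((j / (N : ℤ) : ℤ) : ℂ) := by
        exact_mod_cast congrArg (Int.cast : ℤ → ℂ) hj0rel
      have hcc : (c : ℂ) = (N : ℂ) - 2 * (j : ℂ) := by
        have := congrArg (Int.cast : ℤ → ℂ) h2j
        push_cast at this ⊢
        linear_combination this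
      rw [hj0c, hcc]
      push_cast
      field_simp
      ring
    rw [hexp, Complex.exp_add, Complex.exp_add, Complex.exp_pi_mul_I,
      Complex.exp_int_mul_two_pi_mul_I]
    ring
  have hterm : ∀ p : Fin N,
      Complex.exp (-((Real.pi : ℂ) * Complex.I * ((2 * q + 1 : ℤ) : ℂ) * ((p : ℕ) : ℂ)) / (N : ℂ))
        = (-1 : ℂ) ^ (p : ℕ) * ξ ^ (p : ℕ) := by
    intro p
    have harg : -((Real.pi : ℂ) * Complex.I * ((2 * q + 1 : ℤ) : ℂ) * ((p : ℕ) : ℂ)) / (N : ℂ)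
        = ((p : ℕ) : ℂ) * (-((Real.pi : ℂ) * Complex.I * (c : ℂ)) / (N : ℂ)) := by
      rw [hc]; push_cast; ring
    rw [harg, Complex.exp_nat_mul, hζξ, neg_pow]
  set m : Fin N → ℚ := fun p => (-1 : ℚ) ^ (p : ℕ) * (n p : ℚ) with hm
  have hsum : (∑ p : Fin N, (n p : ℂ) *
      Complex.exp (-((Real.pi : ℂ) * Complex.I * ((2 * q + 1 : ℤ) : ℂ) * ((p : ℕ) : ℂ)) / (N : ℂ)))
      = ∑ p : Fin N, ((m p : ℚ) : ℂ) * ξ ^ (p : ℕ) := by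
    apply Finset.sum_congr rfl
    intro p _
    rw [hterm p, hm]
    push_cast
    ring
  rw [hsum]
  constructor
  · intro h0
    have key := prime_root_sum_eq_zero_iff N hN ξ hξ m h0
    intro p
    have heqQ := key p
    rw [hm] at heqQ
    simp only [Fin.val_mk, pow_zero, one_mul] at heqQ
    have heq : (-1 : ℤ) ^ (p : ℕ) * n p = n ⟨0, hN.pos⟩ := by exact_mod_cast heqQ
    have hsq : ((-1 : ℤ) ^ (p : ℕ)) * ((-1 : ℤ) ^ (p : ℕ)) = 1 := by
      rw [← pow_add, ← two_mul, pow_mul]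
      norm_num
    linear_combination ((-1 : ℤ) ^ (p : ℕ)) * heq - (n p) * hsq
  · intro hr
    have hmc : ∀ p : Fin N, (m p : ℂ) = ((n ⟨0, hN.pos⟩ : ℤ) : ℂ) := by
      intro p
      have hmp : m p = (-1 : ℚ) ^ (p : ℕ) * (n p : ℚ) := rfl
      rw [hmp, hr p]
      push_cast
      have hsq : ((-1 : ℂ) ^ (p : ℕ)) * ((-1 : ℂ) ^ (p : ℕ)) = 1 := by
        rw [← pow_add, ← two_mul, pow_mul]
        norm_num
      linear_combination ((n ⟨0, hN.pos⟩ : ℤ) : ℂ) * hsq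
    calc ∑ p : Fin N, ((m p : ℚ) : ℂ) * ξ ^ (p : ℕ)
        = ((n ⟨0, hN.pos⟩ : ℤ) : ℂ) * ∑ i ∈ Finset.range N, ξ ^ i := by
          rw [Finset.mul_sum, ← Fin.sum_univ_eq_sum_range]
          exact Finset.sum_congr rfl fun p _ => by rw [hmc p]
      _ = 0 := by rw [hξ.geom_sum_eq_zero hN.one_lt, mul_zero]
end

section
/- Let N ≥ 1 and let q be an integer with gcd(2N, 2q+1) = 1, and assume N is not a power of 2. Let p be an odd prime dividing N. If n ∈ ℤ^N satisfies n_j = (-1)^{⌊ j·p / N ⌋} · n_{j mod (N/p)} for all 0 ≤ j ≤ N-1, then Σ_{j=0}^{N-1} n_j · exp(-iπ (2q+1) j / N) = 0. -/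
theorem negacyclic_coprime_prime_factor_solution (N : ℕ) (hN : 1 ≤ N)
    (q : ℤ) (hq : Int.gcd (2 * (N : ℤ)) (2 * q + 1) = 1)
    (hNotPow : ¬ ∃ m : ℕ, N = 2 ^ m)
    (p : ℕ) (hp : p.Prime) (hpodd : Odd p) (hpd : p ∣ N)
    (n : Fin N → ℤ)
    (hn : ∀ j : Fin N, n j = (-1 : ℤ) ^ ((j : ℕ) * p / N) *
      n ⟨(j : ℕ) % (N / p), lt_of_le_of_lt (Nat.mod_le _ _) j.isLt⟩) :
    ∑ j : Fin N, (n j : ℂ) *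
      Complex.exp (-((Real.pi : ℂ) * Complex.I * ((2 * q + 1 : ℤ) : ℂ) * ((j : ℕ) : ℂ)) / (N : ℂ))
      = 0 := by
  obtain ⟨M, hNM⟩ := hpd
  subst hNM
  have hp0 : 0 < p := hp.pos
  have hM0 : 0 < M := by
    rcases Nat.eq_zero_or_pos M with h | h
    · simp [h] at hN
    · exact h
  have hpC : (p : ℂ) ≠ 0 := Nat.cast_ne_zero.2 hp0.ne'
  have hMC : (M : ℂ) ≠ 0 := Nat.cast_ne_zero.2 hM0.ne'
  have hπ : (Real.pi : ℂ) ≠ 0 := Complex.ofReal_ne_zero.2 Real.pi_ne_zero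
  set c : ℂ := ((2 * q + 1 : ℤ) : ℂ) with hc
  set x : ℂ := Complex.exp (-(Real.pi * Complex.I * c) / ((p * M : ℕ) : ℂ)) with hx
  have hterm : ∀ j : Fin (p * M),
      Complex.exp (-((Real.pi : ℂ) * Complex.I * c * ((j : ℕ) : ℂ)) / ((p * M : ℕ) : ℂ))
        = x ^ (j : ℕ) := by
    intro j
    rw [hx, ← Complex.exp_nat_mul]
    ring_nf
  have hxM : x ^ M = Complex.exp (-(Real.pi * Complex.I * c) / (p : ℂ)) := by
    rw [hx, ← Complex.exp_nat_mul]
    congr 1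
    push_cast
    field_simp
  have hxMp : (x ^ M) ^ p = -1 := by
    rw [hxM, ← Complex.exp_nat_mul]
    have h1 : (p : ℂ) * (-(Real.pi * Complex.I * c) / (p : ℂ)) = -(Real.pi * Complex.I * c) := by
      field_simp
    rw [h1]
    have h2 : -(Real.pi * Complex.I * c) = ((-(2 * q + 1) : ℤ) : ℂ) * (Real.pi * Complex.I) := by
      push_cast [hc]; ring
    rw [h2, Complex.exp_int_mul, Complex.exp_pi_mul_I]
    exact Odd.neg_one_zpow ⟨-(q + 1), by ring⟩
  set z : ℂ := -(x ^ M) with hz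
  have hzp : z ^ p = 1 := by
    rw [hz, neg_pow, hxMp, Odd.neg_one_pow hpodd]
    ring
  have hz1 : z ≠ 1 := by
    intro h
    have hxm1 : x ^ M = -1 := by
      have := congrArg Neg.neg h
      simpa [hz] using this
    have hsq : Complex.exp ((2 : ℕ) * (-(Real.pi * Complex.I * c) / (p : ℂ))) = 1 := by
      rw [Complex.exp_nat_mul, ← hxM, hxm1]
      norm_num
    obtain ⟨k, hk⟩ := Complex.exp_eq_one_iff.mp hsq
    have hne : (2 * (Real.pi : ℂ) * Complex.I) ≠ 0 := by
      simp [Real.pi_ne_zero, Complex.I_ne_zero]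
    have hc2 : (2 * (Real.pi : ℂ) * Complex.I) * c = (2 * (Real.pi : ℂ) * Complex.I) * (-(k : ℂ) * p) := by
      field_simp at hk
      linear_combination (-((Real.pi : ℂ) * Complex.I)) * hk
    have hcc : c = -(k : ℂ) * p := mul_left_cancel₀ hne hc2
    have hint : (2 * q + 1 : ℤ) = -k * p := by
      rw [hc] at hcc
      exact_mod_cast hcc
    have hpdvd : (p : ℤ) ∣ 2 * q + 1 := ⟨-k, by linarith [hint]⟩
    have hpg : (p : ℤ) ∣ (Int.gcd (2 * ((p * M : ℕ) : ℤ)) (2 * q + 1) : ℤ) :=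
      Int.dvd_coe_gcd ⟨2 * M, by push_cast; ring⟩ hpdvd
    rw [hq] at hpg
    have : p = 1 := by exact_mod_cast Int.eq_one_of_dvd_one (by positivity) hpg
    exact hp.one_lt.ne' this
  have hgeom : ∑ a ∈ Finset.range p, z ^ a = 0 := by
    rw [geom_sum_eq hz1, hzp]
    simp
  -- index bookkeeping
  have hdivp : p * M / p = M := Nat.mul_div_cancel_left M hp0
  have hlt : ∀ b : Fin M, (b : ℕ) < p * M := fun b =>
    lt_of_lt_of_le b.isLt (Nat.le_mul_of_pos_left M hp0)
  have key : ∀ a : Fin p, ∀ b : Fin M,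
      n (finProdFinEquiv (a, b)) = (-1 : ℤ) ^ (a : ℕ) * n ⟨(b : ℕ), hlt b⟩ := by
    intro a b
    have hval : ((finProdFinEquiv (a, b) : Fin (p * M)) : ℕ) = (b : ℕ) + M * (a : ℕ) := rfl
    rw [hn (finProdFinEquiv (a, b))]
    have hmod : ((finProdFinEquiv (a, b) : Fin (p * M)) : ℕ) % (p * M / p) = (b : ℕ) := by
      rw [hval, hdivp, Nat.add_mul_mod_self_left, Nat.mod_eq_of_lt b.isLt]
    have hdiv : ((finProdFinEquiv (a, b) : Fin (p * M)) : ℕ) * p / (p * M) = (a : ℕ) := by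
      rw [hval]
      have : ((b : ℕ) + M * (a : ℕ)) * p = (b : ℕ) * p + (p * M) * (a : ℕ) := by ring
      rw [this, Nat.add_mul_div_left _ _ (Nat.mul_pos hp0 hM0),
        Nat.div_eq_of_lt (by rw [mul_comm p M]; exact (Nat.mul_lt_mul_right hp0).2 b.isLt)]
      omega
    rw [hdiv]
    refine congrArg _ (congrArg n (Fin.ext ?_))
    simpa using hmod
  calc ∑ j : Fin (p * M), (n j : ℂ) *
      Complex.exp (-((Real.pi : ℂ) * Complex.I * c * ((j : ℕ) : ℂ)) / ((p * M : ℕ) : ℂ))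
      = ∑ j : Fin (p * M), (n j : ℂ) * x ^ (j : ℕ) := by
        exact Finset.sum_congr rfl fun j _ => by rw [hterm j]
    _ = ∑ ab : Fin p × Fin M, (n (finProdFinEquiv ab) : ℂ) * x ^ ((finProdFinEquiv ab : Fin (p * M)) : ℕ) :=
        (Equiv.sum_comp finProdFinEquiv _).symm
    _ = ∑ a : Fin p, ∑ b : Fin M, z ^ (a : ℕ) * ((n ⟨(b : ℕ), hlt b⟩ : ℂ) * x ^ (b : ℕ)) := by
        rw [Fintype.sum_prod_type]
        refine Finset.sum_congr rfl fun a _ => Finset.sum_congr rfl fun b _ => ?_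
        have hval : ((finProdFinEquiv (a, b) : Fin (p * M)) : ℕ) = (b : ℕ) + M * (a : ℕ) := rfl
        rw [key a b, hval, pow_add, pow_mul]
        push_cast
        rw [hz]
        ring
    _ = (∑ a : Fin p, z ^ (a : ℕ)) * (∑ b : Fin M, (n ⟨(b : ℕ), hlt b⟩ : ℂ) * x ^ (b : ℕ)) := by
        rw [Finset.sum_mul]
        exact Finset.sum_congr rfl fun a _ => (Finset.mul_sum _ _ _).symm
    _ = 0 := by
        rw [Fin.sum_univ_eq_sum_range (fun a => z ^ a), hgeom, zero_mul]
end

section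
/- Let N ≥ 1 and let q be an integer; set L = gcd(2N, 2q+1), Ñ = 2N/L and q̃ = (2q+1)/L. Then for every n ∈ ℂ^N: Σ_{p=0}^{N-1} n_p · exp(-iπ (2q+1) p / N) = Σ_{l=0}^{Ñ-1} y_l · exp(-2πi q̃ l / Ñ), where y_l = Σ_{0 ≤ k < N, k ≡ l (mod Ñ)} n_k. -/
theorem negacyclic_fold_sum (N : ℕ) (hN : 1 ≤ N) (q : ℤ)
    (L : ℕ) (hL : L = Int.gcd (2 * (N : ℤ)) (2 * q + 1))
    (Ntil : ℕ) (hNtil : Ntil = 2 * N / L)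
    (qtil : ℤ) (hqtil : qtil = (2 * q + 1) / (L : ℤ))
    (n : Fin N → ℂ)
    (y : ℕ → ℂ) (hy : ∀ l, y l = ∑ k ∈ Finset.range N, if k % Ntil = l then pad n k else 0) :
    ∑ p : Fin N, n p *
        Complex.exp (-((Real.pi : ℂ) * Complex.I * ((2 * q + 1 : ℤ) : ℂ) * ((p : ℕ) : ℂ)) / (N : ℂ))
      = ∑ l ∈ Finset.range Ntil, y l *
        Complex.exp (-(2 * (Real.pi : ℂ) * Complex.I * (qtil : ℂ) * (l : ℂ)) / (Ntil : ℂ)) := by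
  have hq1 : (2 * q + 1 : ℤ) ≠ 0 := by omega
  have hLpos : 0 < L := by
    rw [hL]
    exact Int.gcd_pos_of_ne_zero_right _ hq1
  have hLdvd2N : (L : ℤ) ∣ 2 * N := by rw [hL]; exact Int.gcd_dvd_left _ _
  have hLdvdq : (L : ℤ) ∣ 2 * q + 1 := by rw [hL]; exact Int.gcd_dvd_right _ _
  have hLdvd2N' : L ∣ 2 * N := by exact_mod_cast hLdvd2N
  have hNtilL : (Ntil : ℤ) * L = 2 * N := by
    rw [hNtil]
    exact_mod_cast Nat.div_mul_cancel hLdvd2N'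
  have hqtilL : qtil * L = 2 * q + 1 := by
    rw [hqtil]; exact Int.ediv_mul_cancel hLdvdq
  have hNtilpos : 0 < Ntil := by
    rw [hNtil]
    exact Nat.div_pos (Nat.le_of_dvd (by omega) hLdvd2N') hLpos
  have hZ : (2 * q + 1) * (Ntil : ℤ) = 2 * (N : ℤ) * qtil := by
    rw [← hqtilL, ← hNtilL]; ring
  have hNc : (N : ℂ) ≠ 0 := Nat.cast_ne_zero.mpr (by omega)
  have hNtc : (Ntil : ℂ) ≠ 0 := Nat.cast_ne_zero.mpr (by omega)
  have key : ∀ p : ℕ,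
      Complex.exp (-((Real.pi : ℂ) * Complex.I * ((2 * q + 1 : ℤ) : ℂ) * (p : ℂ)) / (N : ℂ))
        = Complex.exp (-(2 * (Real.pi : ℂ) * Complex.I * (qtil : ℂ) * ((p % Ntil : ℕ) : ℂ)) / (Ntil : ℂ)) := by
    intro p
    have hstep1 :
        -((Real.pi : ℂ) * Complex.I * ((2 * q + 1 : ℤ) : ℂ) * (p : ℂ)) / (N : ℂ)
          = -(2 * (Real.pi : ℂ) * Complex.I * (qtil : ℂ) * (p : ℂ)) / (Ntil : ℂ) := by
      have hZc : ((2 * q + 1 : ℤ) : ℂ) * (Ntil : ℂ) = 2 * (N : ℂ) * (qtil : ℂ) := by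
        exact_mod_cast congrArg (fun z : ℤ => (z : ℂ)) hZ
      field_simp
      push_cast at hZc ⊢
      linear_combination (-(p : ℂ)) * hZc
    rw [hstep1]
    have hp : p = Ntil * (p / Ntil) + p % Ntil := (Nat.div_add_mod p Ntil).symm
    have hsplit :
        -(2 * (Real.pi : ℂ) * Complex.I * (qtil : ℂ) * (p : ℂ)) / (Ntil : ℂ)
          = -(2 * (Real.pi : ℂ) * Complex.I * (qtil : ℂ) * ((p % Ntil : ℕ) : ℂ)) / (Ntil : ℂ)
            + ((-qtil * (p / Ntil : ℕ) : ℤ) : ℂ) * (2 * (Real.pi : ℂ) * Complex.I) := by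
      have : (p : ℂ) = (Ntil : ℂ) * ((p / Ntil : ℕ) : ℂ) + ((p % Ntil : ℕ) : ℂ) := by
        exact_mod_cast congrArg (fun k : ℕ => (k : ℂ)) hp
      rw [this]
      simp only [Int.cast_mul, Int.cast_neg, Int.cast_natCast]
      field_simp
      ring
    rw [hsplit, Complex.exp_add, Complex.exp_int_mul_two_pi_mul_I, mul_one]
  calc ∑ p : Fin N, n p *
        Complex.exp (-((Real.pi : ℂ) * Complex.I * ((2 * q + 1 : ℤ) : ℂ) * ((p : ℕ) : ℂ)) / (N : ℂ))
      = ∑ k ∈ Finset.range N, pad n k *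
          Complex.exp (-(2 * (Real.pi : ℂ) * Complex.I * (qtil : ℂ) * ((k % Ntil : ℕ) : ℂ)) / (Ntil : ℂ)) := by
        rw [← Fin.sum_univ_eq_sum_range]
        refine Finset.sum_congr rfl fun p _ => ?_
        rw [key (p : ℕ)]
        congr 1
        simp [pad, p.isLt]
    _ = ∑ l ∈ Finset.range Ntil, y l *
        Complex.exp (-(2 * (Real.pi : ℂ) * Complex.I * (qtil : ℂ) * (l : ℂ)) / (Ntil : ℂ)) := by
        simp only [hy, Finset.sum_mul]
        rw [Finset.sum_comm]
        refine Finset.sum_congr rfl fun k hk => ?_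
        simp only [ite_mul, zero_mul]
        rw [Finset.sum_ite_eq]
        simp [Nat.mod_lt _ hNtilpos]
end

section
/- Let N ≥ 1 and let q be an integer with L = gcd(2N, 2q+1) > 1, and assume N = 2^m · L for some integer m ≥ 1. Set Ñ = 2N/L. Let n ∈ ℤ^N and define the folded coefficients y_l = Σ_{0 ≤ k < N, k ≡ l (mod Ñ)} n_k for 0 ≤ l < Ñ. If y_l = y_{l mod (Ñ/2)} for all 0 ≤ l < Ñ, then Σ_{j=0}^{N-1} n_j · exp(-iπ (2q+1) j / N) = 0. -/
theorem negacyclic_case_three_solution (N : ℕ) (hN : 1 ≤ N) (q : ℤ)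
    (L : ℕ) (hL : L = Int.gcd (2 * (N : ℤ)) (2 * q + 1)) (hL1 : 1 < L)
    (m : ℕ) (hm : 1 ≤ m) (hNm : N = 2 ^ m * L)
    (Ntil : ℕ) (hNtil : Ntil = 2 * N / L)
    (n : Fin N → ℤ)
    (y : ℕ → ℤ) (hy : ∀ l, y l = ∑ k ∈ Finset.range N, if k % Ntil = l then pad n k else 0)
    (h : ∀ l < Ntil, y l = y (l % (Ntil / 2))) :
    ∑ j : Fin N, (n j : ℂ) *
      Complex.exp (-((Real.pi : ℂ) * Complex.I * ((2 * q + 1 : ℤ) : ℂ) * ((j : ℕ) : ℂ)) / (N : ℂ))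
      = 0 := by
  have hLpos : 0 < L := by omega
  -- Ntil = 2^(m+1), M = 2^m
  set M : ℕ := 2 ^ m with hM
  have hNtilval : Ntil = 2 * M := by
    rw [hNtil, hNm, hM]
    rw [show 2 * (2 ^ m * L) = (2 * 2 ^ m) * L by ring]
    rw [Nat.mul_div_cancel _ hLpos]
  have hMpos : 0 < M := Nat.pow_pos (by norm_num)
  have hNtilpos : 0 < Ntil := by omega
  have hhalf : Ntil / 2 = M := by omega
  -- q̃
  have hLdvd : (L : ℤ) ∣ (2 * q + 1) := by rw [hL]; exact Int.gcd_dvd_right _ _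
  obtain ⟨qt, hqt⟩ := hLdvd
  have hqtodd : Odd qt := by
    have hodd : Odd (2 * q + 1) := ⟨q, by ring⟩
    rw [hqt, Int.odd_mul] at hodd
    exact hodd.2
  have key1 : ((2 * q + 1) * (Ntil : ℤ)) = 2 * qt * N := by
    rw [hqt, hNtilval, hNm, hM]; push_cast; ring
  have key2 : ((2 * q + 1) * (M : ℤ)) = qt * N := by
    rw [hqt, hNm, hM]; push_cast; ring
  have hNne : (N : ℂ) ≠ 0 := by
    simp only [ne_eq, Nat.cast_eq_zero]; omega
  set E : ℕ → ℂ := fun j =>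
    Complex.exp (-((Real.pi : ℂ) * Complex.I * ((2 * q + 1 : ℤ) : ℂ) * (j : ℂ)) / (N : ℂ))
    with hE
  -- periodicity
  have hEper : ∀ j, E (j + Ntil) = E j := by
    intro j
    have hB : -((Real.pi : ℂ) * Complex.I * ((2 * q + 1 : ℤ) : ℂ) * ((j + Ntil : ℕ) : ℂ)) / (N : ℂ)
        = -((Real.pi : ℂ) * Complex.I * ((2 * q + 1 : ℤ) : ℂ) * (j : ℂ)) / (N : ℂ)
          + ((-qt : ℤ) : ℂ) * (2 * Real.pi * Complex.I) := by
      have hk : (2 * (q : ℂ) + 1) * (Ntil : ℂ) = 2 * (qt : ℂ) * (N : ℂ) := by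
        exact_mod_cast congrArg (Int.cast : ℤ → ℂ) key1
      push_cast
      rw [div_add' _ _ _ hNne, div_eq_div_iff hNne hNne]
      linear_combination (-(Real.pi : ℂ) * Complex.I * (N : ℂ)) * hk
    rw [hE]; simp only
    rw [hB, Complex.exp_add, Complex.exp_int_mul_two_pi_mul_I, mul_one]
  have hEmod : ∀ j, E j = E (j % Ntil) := by
    intro j
    have key : ∀ t a, E (a + Ntil * t) = E a := by
      intro t
      induction t with
      | zero => simp
      | succ k ih =>
        intro a
        have : a + Ntil * (k + 1) = (a + Ntil * k) + Ntil := by ring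
        rw [this, hEper, ih]
    conv_lhs => rw [← Nat.mod_add_div j Ntil]
    exact key _ _
  have hEhalf : ∀ l, E (l + M) = - E l := by
    intro l
    have hB : -((Real.pi : ℂ) * Complex.I * ((2 * q + 1 : ℤ) : ℂ) * ((l + M : ℕ) : ℂ)) / (N : ℂ)
        = -((Real.pi : ℂ) * Complex.I * ((2 * q + 1 : ℤ) : ℂ) * (l : ℂ)) / (N : ℂ)
          + ((-qt : ℤ) : ℂ) * ((Real.pi : ℂ) * Complex.I) := by
      have hk : (2 * (q : ℂ) + 1) * (M : ℂ) = (qt : ℂ) * (N : ℂ) := by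
        exact_mod_cast congrArg (Int.cast : ℤ → ℂ) key2
      push_cast
      rw [div_add' _ _ _ hNne, div_eq_div_iff hNne hNne]
      linear_combination (-(Real.pi : ℂ) * Complex.I * (N : ℂ)) * hk
    rw [hE]; simp only
    rw [hB, Complex.exp_add, Complex.exp_int_mul, Complex.exp_pi_mul_I]
    rw [(hqtodd.neg).neg_one_zpow]
    ring
  -- rewrite the main sum
  have step1 : ∑ j : Fin N, (n j : ℂ) *
      Complex.exp (-((Real.pi : ℂ) * Complex.I * ((2 * q + 1 : ℤ) : ℂ) * ((j : ℕ) : ℂ)) / (N : ℂ))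
      = ∑ j ∈ Finset.range N, ((pad n j : ℤ) : ℂ) * E j := by
    rw [← Fin.sum_univ_eq_sum_range (fun j => ((pad n j : ℤ) : ℂ) * E j) N]
    refine Finset.sum_congr rfl fun j _ => ?_
    simp [pad, j.isLt, hE]
  rw [step1]
  have step2 : ∑ j ∈ Finset.range N, ((pad n j : ℤ) : ℂ) * E j
      = ∑ l ∈ Finset.range Ntil, ((y l : ℤ) : ℂ) * E l := by
    rw [← Finset.sum_fiberwise_of_maps_to (g := fun j => j % Ntil)
      (t := Finset.range Ntil) (fun x _ => Finset.mem_range.mpr (Nat.mod_lt x hNtilpos))]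
    refine Finset.sum_congr rfl fun l hl => ?_
    have : ∀ j ∈ (Finset.range N).filter (fun j => j % Ntil = l),
        ((pad n j : ℤ) : ℂ) * E j = ((pad n j : ℤ) : ℂ) * E l := by
      intro j hj
      rw [Finset.mem_filter] at hj
      rw [hEmod j, hj.2]
    rw [Finset.sum_congr rfl this, ← Finset.sum_mul]
    congr 1
    rw [hy l, Finset.sum_filter]
    push_cast
    rfl
  rw [step2]
  -- split range Ntil = range (2 M)
  rw [hNtilval, show 2 * M = M + M by ring, Finset.sum_range_add, ← Finset.sum_add_distrib]
  apply Finset.sum_eq_zero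
  intro l hl
  have hlM : l < M := Finset.mem_range.mp hl
  have hyl : y (M + l) = y l := by
    have := h (M + l) (by omega)
    rw [this, hhalf, Nat.add_mod_left, Nat.mod_eq_of_lt hlM]
  rw [hyl, show M + l = l + M by ring, hEhalf]
  ring
end
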